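/- For every finite, simple, connected, undirected graph G: if the concurrent cop number c̃(G) equals 1, then the cop number c(G) equals 1. -/

import Mathlib

open Finset Filter

noncomputable section

variable {V : Type*} [Fintype V] [DecidableEq V]

/-- The closed neighborhood `N[u]` of a vertex `u`: `u` together with its neighbors. -/
def nbhd (G : SimpleGraph V) [DecidableRel G.Adj] (u : V) : Finset V :=
  insert u (G.neighborFinset u)

lemma nbhd_nonempty (G : SimpleGraph V) [DecidableRel G.Adj] (u : V) :
    (nbhd G u).Nonempty :=
  ⟨u, Finset.mem_insert_self u _⟩

/-! ### The turn-based cops and robber game (TBCR) with `K` cops -/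

/-- A position of the `K`-cop game: the cops' locations and the robber's location. -/
abbrev PosK (V : Type*) (K : ℕ) := (Fin K → V) × V

/-- A (deterministic, history-dependent) cop strategy for TBCR: an initial placement
of the `K` cops, and a move function from histories of completed rounds. -/
abbrev TBCop (V : Type*) (K : ℕ) := (Fin K → V) × (List (PosK V K) → Fin K → V)

/-- A (deterministic, history-dependent) robber strategy for TBCR: an initial placement
(seeing the cops' placement), and a move function from histories of completed rounds
together with the cops' fresh move (the cop player moves first in each round). -/
abbrev TBRob (V : Type*) (K : ℕ) := ((Fin K → V) → V) × (List (PosK V K) → (Fin K → V) → V)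

/-- The history of completed rounds of TBCR after round `t`; each token must move within its
closed neighborhood (attempted illegal moves leave the token in place). -/
def tbPlay (G : SimpleGraph V) [DecidableRel G.Adj] {K : ℕ}
    (sc : TBCop V K) (sr : TBRob V K) : ℕ → List (PosK V K)
  | 0 => [(sc.1, sr.1 sc.1)]
  | (t+1) =>
    let h := tbPlay G sc sr t
    let p := h.getLast?.getD (sc.1, sr.1 sc.1)
    let c' : Fin K → V := fun i => if sc.2 h i ∈ nbhd G (p.1 i) then sc.2 h i else p.1 i
    let w := sr.2 h c'
    h ++ [(c', if w ∈ nbhd G p.2 then w else p.2)]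

/-- The position of the TBCR game at the end of round `t`. -/
def tbPos (G : SimpleGraph V) [DecidableRel G.Adj] {K : ℕ}
    (sc : TBCop V K) (sr : TBRob V K) (t : ℕ) : PosK V K :=
  (tbPlay G sc sr t).getLast?.getD (sc.1, sr.1 sc.1)

/-- The robber is captured in TBCR: at some time a cop occupies the robber's current
vertex (either at the end of a round, or just after the cops' half of a round). -/
def tbCaptured (G : SimpleGraph V) [DecidableRel G.Adj] {K : ℕ}
    (sc : TBCop V K) (sr : TBRob V K) : Prop :=
  ∃ t : ℕ, ∃ i : Fin K,
    (tbPos G sc sr t).1 i = (tbPos G sc sr t).2 ∨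
    (tbPos G sc sr (t+1)).1 i = (tbPos G sc sr t).2

/-- `K` cops suffice in the turn-based game: the cop player has a strategy guaranteeing
capture against every robber strategy. -/
def tbCopWin (G : SimpleGraph V) [DecidableRel G.Adj] (K : ℕ) : Prop :=
  ∃ sc : TBCop V K, ∀ sr : TBRob V K, tbCaptured G sc sr

/-- The cop number `c(G)`: the minimum `K` for which the cop player wins TBCR. -/
def copNumber (G : SimpleGraph V) [DecidableRel G.Adj] : ℕ :=
  sInf {K | tbCopWin G K}

/-! ### The concurrent cops and robber game (CCCR) with `K` cops -/

/-- A randomized cop strategy in CCCR: to each finite history it assigns a probability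
distribution over the cops' next moves. -/
abbrev CCCop (V : Type*) (K : ℕ) := List (PosK V K) → PMF (Fin K → V)

/-- A randomized robber strategy in CCCR. -/
abbrev CCRob (V : Type*) (K : ℕ) := List (PosK V K) → PMF V

/-- A strategy is memoryless if the distribution it assigns depends only on the
current (i.e. most recent) position. -/
def MemorylessK {K : ℕ} (π : List (PosK V K) → PMF (Fin K → V)) : Prop :=
  ∀ h₁ h₂ : List (PosK V K), h₁.getLast? = h₂.getLast? → π h₁ = π h₂

/-- The CCCR transition function for `K` cops: both players move simultaneously, each
token within its closed neighborhood (illegal moves are ignored); a capture position is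
absorbing; if a cop and the robber swap adjacent vertices, the robber is captured
\"en passant\". -/
def ccStep (G : SimpleGraph V) [DecidableRel G.Adj] {K : ℕ}
    (p : PosK V K) (u : Fin K → V) (w : V) : PosK V K :=
  if ∃ i, p.1 i = p.2 then p
  else
    let u' : Fin K → V := fun i => if u i ∈ nbhd G (p.1 i) then u i else p.1 i
    let w' : V := if w ∈ nbhd G p.2 then w else p.2
    if ∃ i, u' i = p.2 ∧ w' = p.1 i then (u', p.2) else (u', w')

/-- The distribution over histories of the first `t+1` positions of CCCR, induced by a
pair of randomized strategies and an initial position. -/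
def ccPlay (G : SimpleGraph V) [DecidableRel G.Adj] {K : ℕ}
    (πC : CCCop V K) (πR : CCRob V K) (init : PosK V K) : ℕ → PMF (List (PosK V K))
  | 0 => PMF.pure [init]
  | (t+1) => (ccPlay G πC πR init t).bind fun h =>
      (πC h).bind fun u => (πR h).bind fun w =>
        PMF.pure (h ++ [ccStep G (h.getLast?.getD init) u w])

/-- The probability that the robber is still free (not captured) after round `t`. -/
def ccFreeProb (G : SimpleGraph V) [DecidableRel G.Adj] {K : ℕ}
    (πC : CCCop V K) (πR : CCRob V K) (init : PosK V K) (t : ℕ) : ENNReal :=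
  (ccPlay G πC πR init t).toOuterMeasure
    {h | ∀ i, (h.getLast?.getD init).1 i ≠ (h.getLast?.getD init).2}

/-- `K` cops suffice in the concurrent game: the cop player has a strategy ensuring
that, from every initial position and against every robber strategy, capture occurs
with probability one (the set of infinite histories avoiding capture has probability
zero). -/
def ccCopWin (G : SimpleGraph V) [DecidableRel G.Adj] (K : ℕ) : Prop :=
  ∃ πC : CCCop V K, ∀ init : PosK V K, ∀ πR : CCRob V K,
    (⨅ t : ℕ, ccFreeProb G πC πR init t) = 0

/-- The concurrent cop number `c̃(G)`. -/
def ccopNumber (G : SimpleGraph V) [DecidableRel G.Adj] : ℕ :=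
  sInf {K | ccCopWin G K}

/-! ### Auxiliary development -/

/-- `DWin n u v`: with the cop at `u` and the robber at `v`, in the game where each round the
robber first commits a move (within `N[v]`) and then the cop responds, the cop can ensure that
within `n` rounds the robber's committed move lands in the cop's closed neighborhood. -/
def DWin (G : SimpleGraph V) [DecidableRel G.Adj] : ℕ → V → V → Prop
  | 0, _, _ => False
  | (n+1), u, v => ∀ v' ∈ nbhd G v, v' ∈ nbhd G u ∨ ∃ u' ∈ nbhd G u, DWin G n u' v'

/-- The cop wins the robber-commits-first game in some number of rounds. -/
def Dd (G : SimpleGraph V) [DecidableRel G.Adj] (u v : V) : Prop :=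
  ∃ n, DWin G n u v

lemma DWin.mono (G : SimpleGraph V) [DecidableRel G.Adj] :
    ∀ {n m : ℕ} {u v : V}, n ≤ m → DWin G n u v → DWin G m u v := by
  intro n
  induction n with
  | zero => intro m u v _ h; exact h.elim
  | succ n ih =>
    intro m u v hnm h
    obtain ⟨m, rfl⟩ : ∃ m', m = m' + 1 := ⟨m - 1, by omega⟩
    intro v' hv'
    rcases h v' hv' with h1 | ⟨u', hu', hd⟩
    · exact Or.inl h1
    · exact Or.inr ⟨u', hu', ih (by omega) hd⟩

lemma dd_of_forall (G : SimpleGraph V) [DecidableRel G.Adj] {u v : V}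
    (h : ∀ v' ∈ nbhd G v, v' ∈ nbhd G u ∨ ∃ u' ∈ nbhd G u, Dd G u' v') : Dd G u v := by
  classical
  set N : ℕ := (nbhd G v).sup
    (fun v' => if h' : ∃ n, ∃ u' ∈ nbhd G u, DWin G n u' v' then h'.choose else 0) with hN
  refine ⟨N + 1, fun v' hv' => ?_⟩
  rcases h v' hv' with h1 | ⟨u', hu', n, hd⟩
  · exact Or.inl h1
  · have h' : ∃ n, ∃ u' ∈ nbhd G u, DWin G n u' v' := ⟨n, u', hu', hd⟩
    obtain ⟨u'', hu'', hd''⟩ := h'.choose_spec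
    have hle : h'.choose ≤ N := by
      have := Finset.le_sup (f := fun v' =>
        if h' : ∃ n, ∃ u' ∈ nbhd G u, DWin G n u' v' then h'.choose else 0) hv'
      simpa [dif_pos h'] using this
    exact Or.inr ⟨u'', hu'', DWin.mono G hle hd''⟩

lemma not_dd_ne (G : SimpleGraph V) [DecidableRel G.Adj] {u v : V}
    (h : ¬ Dd G u v) : u ≠ v := by
  rintro rfl
  exact h ⟨1, fun v' hv' => Or.inl hv'⟩

lemma not_dd_step (G : SimpleGraph V) [DecidableRel G.Adj] {u v : V} (h : ¬ Dd G u v) :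
    ∃ v', v' ∈ nbhd G v ∧ v' ∉ nbhd G u ∧ ∀ u' ∈ nbhd G u, ¬ Dd G u' v' := by
  by_contra hc
  push_neg at hc
  refine h (dd_of_forall G fun v' hv' => ?_)
  by_cases h1 : v' ∈ nbhd G u
  · exact Or.inl h1
  · obtain ⟨u', hu', hd⟩ := hc v' hv' h1
    exact Or.inr ⟨u', hu', hd⟩

/-- The rank of a pair in the robber-commits-first game. -/
noncomputable def drank (G : SimpleGraph V) [DecidableRel G.Adj]
    (hall : ∀ u v : V, Dd G u v) (u v : V) : ℕ :=
  @Nat.find _ (Classical.decPred _) (hall u v)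

lemma drank_spec (G : SimpleGraph V) [DecidableRel G.Adj]
    (hall : ∀ u v : V, Dd G u v) (u v : V) : DWin G (drank G hall u v) u v :=
  @Nat.find_spec _ (Classical.decPred _) (hall u v)

lemma drank_le (G : SimpleGraph V) [DecidableRel G.Adj]
    (hall : ∀ u v : V, Dd G u v) {u v : V} {n : ℕ} (h : DWin G n u v) :
    drank G hall u v ≤ n :=
  @Nat.find_min' _ (Classical.decPred _) (hall u v) n h

/-- The cop's positional move in the turn-based game. -/
noncomputable def copMove (G : SimpleGraph V) [DecidableRel G.Adj]
    (hall : ∀ u v : V, Dd G u v) (p : PosK V 1) : V :=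
  if p.2 ∈ nbhd G (p.1 0) then p.2
  else (Finset.exists_min_image (nbhd G (p.1 0)) (fun u' => drank G hall u' p.2)
    (nbhd_nonempty G _)).choose

lemma copMove_mem (G : SimpleGraph V) [DecidableRel G.Adj]
    (hall : ∀ u v : V, Dd G u v) (p : PosK V 1) : copMove G hall p ∈ nbhd G (p.1 0) := by
  unfold copMove
  split
  · assumption
  · exact (Finset.exists_min_image (nbhd G (p.1 0)) (fun u' => drank G hall u' p.2)
      (nbhd_nonempty G _)).choose_spec.1

lemma copMove_eq_of_mem (G : SimpleGraph V) [DecidableRel G.Adj]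
    (hall : ∀ u v : V, Dd G u v) (p : PosK V 1) (h : p.2 ∈ nbhd G (p.1 0)) :
    copMove G hall p = p.2 := by
  unfold copMove
  rw [if_pos h]

lemma copMove_min (G : SimpleGraph V) [DecidableRel G.Adj]
    (hall : ∀ u v : V, Dd G u v) (p : PosK V 1) (h : p.2 ∉ nbhd G (p.1 0)) :
    ∀ u' ∈ nbhd G (p.1 0), drank G hall (copMove G hall p) p.2 ≤ drank G hall u' p.2 := by
  unfold copMove
  rw [if_neg h]
  exact (Finset.exists_min_image (nbhd G (p.1 0)) (fun u' => drank G hall u' p.2)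
    (nbhd_nonempty G _)).choose_spec.2

/-- The cop's turn-based strategy. -/
noncomputable def copStrat (G : SimpleGraph V) [DecidableRel G.Adj]
    (hall : ∀ u v : V, Dd G u v) (a : V) : TBCop V 1 :=
  ⟨fun _ => a, fun h _ => copMove G hall (h.getLast?.getD (fun _ => a, a))⟩

open Classical in
/-- The robber's evasion move in the concurrent game. -/
noncomputable def robMove (G : SimpleGraph V) [DecidableRel G.Adj] (p : PosK V 1) : V :=
  if h : ∃ v', v' ∈ nbhd G p.2 ∧ v' ∉ nbhd G (p.1 0) ∧ ∀ u' ∈ nbhd G (p.1 0), ¬ Dd G u' v'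
  then h.choose else p.2

section TB

variable (G : SimpleGraph V) [DecidableRel G.Adj] {K : ℕ} (sc : TBCop V K) (sr : TBRob V K)

lemma tbPlay_ne_nil (t : ℕ) : tbPlay G sc sr t ≠ [] := by
  cases t <;> simp [tbPlay]

lemma tbPlay_getLast?_eq (t : ℕ) :
    (tbPlay G sc sr t).getLast? = some (tbPos G sc sr t) := by
  rw [tbPos]
  rw [List.getLast?_eq_getLast (tbPlay_ne_nil G sc sr t)]
  simp

lemma tbPos_zero : tbPos G sc sr 0 = (sc.1, sr.1 sc.1) := by
  simp [tbPos, tbPlay]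

lemma tbPos_succ (t : ℕ) :
    tbPos G sc sr (t+1) =
      (fun i => if sc.2 (tbPlay G sc sr t) i ∈ nbhd G ((tbPos G sc sr t).1 i)
          then sc.2 (tbPlay G sc sr t) i else (tbPos G sc sr t).1 i,
       if sr.2 (tbPlay G sc sr t)
            (fun i => if sc.2 (tbPlay G sc sr t) i ∈ nbhd G ((tbPos G sc sr t).1 i)
              then sc.2 (tbPlay G sc sr t) i else (tbPos G sc sr t).1 i)
            ∈ nbhd G (tbPos G sc sr t).2
       then sr.2 (tbPlay G sc sr t)
            (fun i => if sc.2 (tbPlay G sc sr t) i ∈ nbhd G ((tbPos G sc sr t).1 i)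
              then sc.2 (tbPlay G sc sr t) i else (tbPos G sc sr t).1 i)
       else (tbPos G sc sr t).2) := by
  conv_lhs => rw [tbPos, tbPlay]
  simp only [List.getLast?_concat, Option.getD_some]
  rfl

lemma tbPos_snd_mem (t : ℕ) :
    (tbPos G sc sr (t+1)).2 ∈ nbhd G ((tbPos G sc sr t).2) := by
  rw [tbPos_succ]
  dsimp only
  split
  · assumption
  · exact Finset.mem_insert_self _ _

end TB

lemma tbPos_fst_copStrat (G : SimpleGraph V) [DecidableRel G.Adj]
    (hall : ∀ u v : V, Dd G u v) (a : V) (sr : TBRob V 1) (t : ℕ) :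
    (tbPos G (copStrat G hall a) sr (t+1)).1 0 =
      copMove G hall (tbPos G (copStrat G hall a) sr t) := by
  set sc := copStrat G hall a with hsc
  have hmv : sc.2 (tbPlay G sc sr t) 0 = copMove G hall (tbPos G sc sr t) := by
    rw [hsc]
    show copMove G hall ((tbPlay G sc sr t).getLast?.getD _) = _
    rw [tbPlay_getLast?_eq]
    rfl
  rw [tbPos_succ]
  dsimp only
  rw [hmv, if_pos (copMove_mem G hall _)]

/-- Main capture lemma for the cop side. -/
lemma copStrat_captures (G : SimpleGraph V) [DecidableRel G.Adj]
    (hall : ∀ u v : V, Dd G u v) (a : V) (sr : TBRob V 1) :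
    tbCaptured G (copStrat G hall a) sr := by
  classical
  set sc := copStrat G hall a with hsc
  have key : ∀ m : ℕ, ∀ t : ℕ,
      DWin G m ((tbPos G sc sr (t+1)).1 0) ((tbPos G sc sr t).2) →
      tbCaptured G sc sr := by
    intro m
    induction m using Nat.strong_induction_on with
    | _ m ih =>
      intro t hD
      match m, hD with
      | (m+1), hD =>
        set c' : V := (tbPos G sc sr (t+1)).1 0 with hc'
        set r : V := (tbPos G sc sr t).2 with hr
        set r' : V := (tbPos G sc sr (t+1)).2 with hr'
        have hr'mem : r' ∈ nbhd G r := tbPos_snd_mem G sc sr t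
        by_cases hcap : r' ∈ nbhd G c'
        · -- the cop captures in round `t+2`
          refine ⟨t+1, 0, Or.inr ?_⟩
          have : (tbPos G sc sr (t+2)).1 0 = copMove G hall (tbPos G sc sr (t+1)) :=
            tbPos_fst_copStrat G hall a sr (t+1)
          rw [this, copMove_eq_of_mem G hall _ (by rw [← hc'] at *; exact hcap)]
        · rcases hD r' hr'mem with h1 | ⟨u', hu', hDu'⟩
          · exact absurd h1 hcap
          · -- rank decreases
            have hc'' : (tbPos G sc sr (t+2)).1 0 = copMove G hall (tbPos G sc sr (t+1)) :=
              tbPos_fst_copStrat G hall a sr (t+1)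
            have hmin := copMove_min G hall (tbPos G sc sr (t+1)) (by exact hcap) u'
              (by rw [← hc'] at *; exact hu')
            have hle : drank G hall (copMove G hall (tbPos G sc sr (t+1))) r' ≤ m :=
              le_trans hmin (drank_le G hall hDu')
            have hDnext : DWin G m ((tbPos G sc sr (t+2)).1 0) ((tbPos G sc sr (t+1)).2) := by
              rw [hc'']
              exact DWin.mono G hle (drank_spec G hall _ _)
            exact ih m (Nat.lt_succ_self m) (t+1) hDnext
  -- initialization
  by_cases h0 : (tbPos G sc sr 0).2 ∈ nbhd G ((tbPos G sc sr 0).1 0)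
  · refine ⟨0, 0, Or.inr ?_⟩
    rw [tbPos_fst_copStrat G hall a sr 0, copMove_eq_of_mem G hall _ h0]
  · have h1 : (tbPos G sc sr 1).1 0 = copMove G hall (tbPos G sc sr 0) :=
      tbPos_fst_copStrat G hall a sr 0
    refine key (drank G hall ((tbPos G sc sr 1).1 0) ((tbPos G sc sr 0).2)) 0 ?_
    exact drank_spec G hall _ _

/-! ### Robber side -/

/-- Safety invariant for the robber in the concurrent game. -/
def RInv (G : SimpleGraph V) [DecidableRel G.Adj] (p : PosK V 1) : Prop :=
  ¬ Dd G (p.1 0) p.2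

lemma RInv.ne (G : SimpleGraph V) [DecidableRel G.Adj] {p : PosK V 1} (h : RInv G p) :
    ∀ i, p.1 i ≠ p.2 := by
  intro i
  rw [Subsingleton.elim i 0]
  exact not_dd_ne G h

lemma robMove_spec (G : SimpleGraph V) [DecidableRel G.Adj] {p : PosK V 1} (h : RInv G p) :
    robMove G p ∈ nbhd G p.2 ∧ robMove G p ∉ nbhd G (p.1 0) ∧
      ∀ u' ∈ nbhd G (p.1 0), ¬ Dd G u' (robMove G p) := by
  have hex : ∃ v', v' ∈ nbhd G p.2 ∧ v' ∉ nbhd G (p.1 0) ∧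
      ∀ u' ∈ nbhd G (p.1 0), ¬ Dd G u' v' := not_dd_step G h
  rw [robMove, dif_pos hex]
  exact hex.choose_spec

lemma RInv.step (G : SimpleGraph V) [DecidableRel G.Adj] {p : PosK V 1} (h : RInv G p)
    (u : Fin 1 → V) : RInv G (ccStep G p u (robMove G p)) := by
  obtain ⟨hmem, hnot, hsafe⟩ := robMove_spec G h
  rw [ccStep]
  rw [if_neg (by rintro ⟨i, hi⟩; exact RInv.ne G h i hi)]
  have hw' : (if robMove G p ∈ nbhd G p.2 then robMove G p else p.2) = robMove G p :=
    if_pos hmem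
  have hu' : ∀ i : Fin 1,
      (if u i ∈ nbhd G (p.1 i) then u i else p.1 i) ∈ nbhd G (p.1 0) := by
    intro i
    rw [Subsingleton.elim i 0]
    split
    · assumption
    · exact Finset.mem_insert_self _ _
  rw [if_neg]
  · simp only [hw']
    exact fun hd => hsafe _ (hu' 0) hd
  · rintro ⟨i, h1, h2⟩
    rw [hw'] at h2
    rw [Subsingleton.elim i 0] at h2
    exact hnot (h2 ▸ Finset.mem_insert_self _ _)

lemma robStrat_support (G : SimpleGraph V) [DecidableRel G.Adj]
    (πC : CCCop V 1) (init : PosK V 1) (hinit : RInv G init) (t : ℕ) :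
    ∀ h ∈ (ccPlay G πC
        (fun hist => PMF.pure (robMove G (hist.getLast?.getD init))) init t).support,
      RInv G (h.getLast?.getD init) := by
  induction t with
  | zero =>
    intro h hh
    rw [ccPlay] at hh
    rw [PMF.support_pure] at hh
    subst hh
    simpa using hinit
  | succ t ih =>
    intro h hh
    rw [ccPlay] at hh
    rw [PMF.mem_support_bind_iff] at hh
    obtain ⟨h', hh', hmem⟩ := hh
    rw [PMF.mem_support_bind_iff] at hmem
    obtain ⟨u, hu, hmem⟩ := hmem
    rw [PMF.mem_support_bind_iff] at hmem
    obtain ⟨w, hw, hmem⟩ := hmem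
    rw [PMF.mem_support_pure_iff] at hmem
    rw [PMF.mem_support_pure_iff] at hw
    subst hmem hw
    rw [List.getLast?_concat, Option.getD_some]
    exact (ih h' hh').step G u

/-- if the concurrent cop number `c̃(G)` equals `1` then the cop number
`c(G)` equals `1`. -/
theorem copNumber_eq_one_of_ccopNumber_eq_one (G : SimpleGraph V) [DecidableRel G.Adj]
    (hconn : G.Connected) (h : ccopNumber G = 1) :
    copNumber G = 1 := by
  classical
  obtain ⟨v⟩ := hconn.nonempty
  have hcc : ccCopWin G 1 := by
    have hne : {K | ccCopWin G K}.Nonempty := by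
      by_contra hc
      rw [Set.not_nonempty_iff_eq_empty] at hc
      rw [ccopNumber, hc] at h
      simp at h
    have hmem := Nat.sInf_mem hne
    rwa [show sInf {K | ccCopWin G K} = 1 from h] at hmem
  by_cases hall : ∀ u v : V, Dd G u v
  · -- every pair is cop-winnable: the cop wins the turn-based game
    have h1 : tbCopWin G 1 := ⟨copStrat G hall v, fun sr => copStrat_captures G hall v sr⟩
    have h0 : ¬ tbCopWin G 0 := by
      rintro ⟨sc, hsc⟩
      obtain ⟨t, i, -⟩ := hsc ⟨fun _ => v, fun _ _ => v⟩
      exact i.elim0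
    refine le_antisymm (Nat.sInf_le h1) ?_
    by_contra hlt
    push_neg at hlt
    have hz : copNumber G = 0 := by omega
    rcases Nat.sInf_eq_zero.mp hz with hmem | hemp
    · exact h0 hmem
    · exact absurd h1 (by rw [Set.eq_empty_iff_forall_notMem] at hemp; exact hemp 1)
  · -- some pair is robber-safe: deterministic concurrent evasion, contradiction
    exfalso
    push_neg at hall
    obtain ⟨u₀, v₀, h₀⟩ := hall
    obtain ⟨πC, hπC⟩ := hcc
    set init : PosK V 1 := (fun _ => u₀, v₀) with hinitdef
    have hinit : RInv G init := h₀
    set πR : CCRob V 1 := fun hist => PMF.pure (robMove G (hist.getLast?.getD init))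
      with hπRdef
    have hfree : ∀ t, ccFreeProb G πC πR init t = 1 := by
      intro t
      rw [ccFreeProb, PMF.toOuterMeasure_apply_eq_one_iff]
      intro hh hmem
      exact RInv.ne G (robStrat_support G πC init hinit t hh hmem)
    have h0' := hπC init πR
    rw [iInf_congr hfree] at h0'
    simp at h0'
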